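/- Let G = (V, E) be a finite loopless graph with k connected components, with a fixed orientation, and let χ*_G(q) denote the number of nowhere-zero ℤ/qℤ-flows on G. Then χ*_G(q) = (−1)^{|E|−|V|+k} T_G(0, 1 − q), where T_G is the Tutte polynomial of the graphic matroid of G. -/

import Mathlib

/-- The number of connected components of the multigraph on `V` whose edges are the
elements of `A`, with endpoints given by `ends`. -/
noncomputable def numComponents {V E : Type*} [Fintype V] (ends : E → V × V)
    (A : Finset E) : ℕ :=
  Nat.card (Quot (fun u v : V => ∃ e ∈ A, ends e = (u, v) ∨ ends e = (v, u)))

/-- The rank of an edge subset in the graphic matroid of the multigraph. -/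
noncomputable def multigraphRk {V E : Type*} [Fintype V] (ends : E → V × V)
    (A : Finset E) : ℕ :=
  Fintype.card V - numComponents ends A

/-- The Tutte polynomial of the graphic matroid of the multigraph, evaluated at `(x, y)`. -/
noncomputable def multigraphTutte {V E : Type*} [Fintype V] [Fintype E]
    (ends : E → V × V) (x y : ℤ) : ℤ :=
  ∑ A ∈ (Finset.univ : Finset E).powerset,
    (x - 1) ^ (multigraphRk ends Finset.univ - multigraphRk ends A)
      * (y - 1) ^ (A.card - multigraphRk ends A)

set_option linter.unusedSectionVars false
set_option linter.unusedVariables false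

section Components

open Finset

variable {V E : Type*} [Fintype V] [Fintype E] [DecidableEq E] (ends : E → V × V)

/-- The edge relation of the subgraph with edge set `A`. -/
def erel (A : Finset E) : V → V → Prop :=
  fun u v => ∃ e ∈ A, ends e = (u, v) ∨ ends e = (v, u)

lemma numComponents_def (A : Finset E) :
    numComponents ends A = Nat.card (Quot (erel ends A)) := rfl

lemma erel_mono {A B : Finset E} (h : A ⊆ B) {a b : V} (hab : erel ends A a b) :
    erel ends B a b := by
  obtain ⟨e, he, h2⟩ := hab; exact ⟨e, h he, h2⟩

lemma mk_mono {A B : Finset E} (h : A ⊆ B) {u v : V}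
    (huv : Quot.mk (erel ends A) u = Quot.mk (erel ends A) v) :
    Quot.mk (erel ends B) u = Quot.mk (erel ends B) v := by
  rw [Quot.eq] at huv ⊢
  exact huv.mono (fun a b hab => erel_mono ends h hab)

lemma edge_mk {A : Finset E} {e : E} (he : e ∈ A) :
    Quot.mk (erel ends A) (ends e).1 = Quot.mk (erel ends A) (ends e).2 :=
  Quot.sound ⟨e, he, Or.inl rfl⟩

instance quotFinite (A : Finset E) : Finite (Quot (erel ends A)) :=
  Finite.of_surjective (Quot.mk _) Quot.mk_surjective

lemma numComponents_empty : numComponents ends (∅ : Finset E) = Fintype.card V := by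
  rw [numComponents_def]
  have hinj : ∀ u v : V, Quot.mk (erel ends (∅ : Finset E)) u
      = Quot.mk (erel ends (∅ : Finset E)) v → u = v := by
    intro u v h
    rw [Quot.eq] at h
    induction h with
    | rel a b h => obtain ⟨e, he, -⟩ := h; simp at he
    | refl => rfl
    | symm a b _ ih => exact ih.symm
    | trans a b c _ _ ih1 ih2 => exact ih1.trans ih2
  rw [← Nat.card_congr (Equiv.ofBijective (Quot.mk (erel ends (∅ : Finset E)))
    ⟨fun u v h => hinj u v h, Quot.mk_surjective⟩), Nat.card_eq_fintype_card]

lemma numComponents_le (A : Finset E) : numComponents ends A ≤ Fintype.card V := by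
  rw [numComponents_def, ← Nat.card_eq_fintype_card (α := V)]
  exact Nat.card_le_card_of_surjective (Quot.mk _) Quot.mk_surjective

lemma numComponents_anti {A B : Finset E} (h : A ⊆ B) :
    numComponents ends B ≤ numComponents ends A := by
  rw [numComponents_def, numComponents_def]
  refine Nat.card_le_card_of_surjective
    (Quot.lift (Quot.mk (erel ends B))
      (fun a b hab => Quot.sound (erel_mono ends h hab))) ?_
  intro y
  induction y using Quot.ind with
  | _ a => exact ⟨Quot.mk _ a, rfl⟩

lemma numComponents_insert_same {A : Finset E} {e : E} {u v : V} (hends : ends e = (u, v))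
    (hsame : Quot.mk (erel ends A) u = Quot.mk (erel ends A) v) :
    numComponents ends (insert e A) = numComponents ends A := by
  rw [numComponents_def, numComponents_def]
  refine Nat.card_congr ⟨Quot.lift (Quot.mk (erel ends A)) ?_,
    Quot.lift (Quot.mk (erel ends (insert e A)))
      (fun a b hab => Quot.sound (erel_mono ends (subset_insert e A) hab)), ?_, ?_⟩
  · intro a b hab
    obtain ⟨e', he', hor⟩ := hab
    rcases Finset.mem_insert.1 he' with rfl | hA
    · rcases hor with h2 | h2
      · rw [hends] at h2
        obtain ⟨rfl, rfl⟩ := Prod.mk.injEq .. ▸ h2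
        exact hsame
      · rw [hends] at h2
        obtain ⟨rfl, rfl⟩ := Prod.mk.injEq .. ▸ h2
        exact hsame.symm
    · exact Quot.sound ⟨e', hA, hor⟩
  · intro x; induction x using Quot.ind with | _ a => rfl
  · intro x; induction x using Quot.ind with | _ a => rfl

open scoped Classical in
lemma numComponents_insert_diff {A : Finset E} {e : E} {u v : V} (hends : ends e = (u, v))
    (hdiff : Quot.mk (erel ends A) u ≠ Quot.mk (erel ends A) v) :
    numComponents ends (insert e A) + 1 = numComponents ends A := by
  set r := erel ends A with hr
  set r' := erel ends (insert e A) with hr'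
  set ψ : V → Quot r := fun x => if Quot.mk r x = Quot.mk r v then Quot.mk r u else Quot.mk r x
    with hψ
  have hψmk : ∀ a b : V, Quot.mk r a = Quot.mk r b → ψ a = ψ b := by
    intro a b h; simp only [hψ, h]
  have hψresp : ∀ a b : V, r' a b → ψ a = ψ b := by
    intro a b hab
    obtain ⟨e', he', hor⟩ := hab
    rcases Finset.mem_insert.1 he' with rfl | hA
    · have key : ψ u = ψ v := by
        simp only [hψ, if_neg hdiff, if_pos rfl]
      rcases hor with h2 | h2 <;> rw [hends] at h2 <;>
        obtain ⟨rfl, rfl⟩ := Prod.mk.injEq .. ▸ h2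
      · exact key
      · exact key.symm
    · exact hψmk a b (Quot.sound ⟨e', hA, hor⟩)
  have hψne : ∀ x : V, ψ x ≠ Quot.mk r v := by
    intro x
    simp only [hψ]
    split
    · exact hdiff
    · assumption
  have huv' : Quot.mk r' u = Quot.mk r' v := Quot.sound ⟨e, mem_insert_self e A, Or.inl hends⟩
  have hcongr : Nat.card (Quot r') = Nat.card {z : Quot r // z ≠ Quot.mk r v} := by
    refine Nat.card_congr ⟨Quot.lift (fun x => (⟨ψ x, hψne x⟩ : {z : Quot r // z ≠ Quot.mk r v}))
      (fun a b hab => Subtype.ext (hψresp a b hab)),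
      fun z => Quot.lift (Quot.mk r')
        (fun a b hab => Quot.sound (erel_mono ends (subset_insert e A) hab)) z.1, ?_, ?_⟩
    · intro x
      induction x using Quot.ind with
      | _ a =>
        simp only [hψ]
        split
        · next h => exact huv'.trans (mk_mono ends (subset_insert e A) h).symm
        · rfl
    · rintro ⟨z, hz⟩
      induction z using Quot.ind with
      | _ a =>
        refine Subtype.ext ?_
        simp only [hψ, if_neg hz]
  have : Nat.card {z : Quot r // z ≠ Quot.mk r v} + 1 = Nat.card (Quot r) := by
    haveI : Fintype (Quot r) := Fintype.ofFinite _
    rw [Nat.card_eq_fintype_card, Nat.card_eq_fintype_card]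
    have := Fintype.card_subtype_compl (fun z : Quot r => z = Quot.mk r v)
    rw [Fintype.card_subtype_eq] at this
    have hle : 1 ≤ Fintype.card (Quot r) :=
      Fintype.card_pos_iff.2 ⟨Quot.mk r v⟩
    simp only [this]
    omega
  rw [numComponents_def, numComponents_def, ← hr, ← hr', hcongr, this]

end Components
section Flows

open Finset

variable {V E : Type*} [Fintype V] [Fintype E] [DecidableEq V] [DecidableEq E]
  (ends : E → V × V) (q : ℕ)

/-- The boundary of a weighting. -/
def bd (w : E → ZMod q) (x : V) : ZMod q :=
  (∑ e ∈ univ.filter (fun e => (ends e).1 = x), w e)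
    - ∑ e ∈ univ.filter (fun e => (ends e).2 = x), w e

lemma bd_zero (x : V) : bd ends q (fun _ => 0) x = 0 := by simp [bd]

lemma bd_neg (w : E → ZMod q) (x : V) :
    bd ends q (fun e => - w e) x = - bd ends q w x := by
  simp [bd, Finset.sum_neg_distrib]; ring

lemma bd_add (w₁ w₂ : E → ZMod q) (x : V) :
    bd ends q (fun e => w₁ e + w₂ e) x = bd ends q w₁ x + bd ends q w₂ x := by
  simp [bd, Finset.sum_add_distrib]; ring

lemma bd_comb (a b₁ b₂ : E → ZMod q) (c : ZMod q) (x : V) :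
    bd ends q (fun e => a e + c * (b₁ e - b₂ e)) x
      = bd ends q a x + c * (bd ends q b₁ x - bd ends q b₂ x) := by
  simp only [bd, mul_sub, Finset.sum_add_distrib, Finset.sum_sub_distrib, Finset.mul_sum]
  ring

/-- The indicator weighting of a single edge. -/
def chi (e : E) : E → ZMod q := fun e' => if e' = e then 1 else 0

lemma chi_of_ne {e e' : E} (h : ¬ e' = e) : chi q e e' = 0 := if_neg h

lemma bd_chi (e : E) (x : V) :
    bd ends q (chi q e) x
      = (if (ends e).1 = x then 1 else 0) - (if (ends e).2 = x then 1 else 0) := by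
  simp only [bd, chi]
  rw [Finset.sum_ite_eq' (univ.filter (fun e' => (ends e').1 = x)) e (fun _ => (1 : ZMod q)),
    Finset.sum_ite_eq' (univ.filter (fun e' => (ends e').2 = x)) e (fun _ => (1 : ZMod q))]
  simp

/-- Potential lemma: if `u` and `v` lie in the same component of `A`, there is a weighting
supported in `A` whose boundary is `δ_u - δ_v`. -/
lemma exists_pot {A : Finset E} {u v : V}
    (h : Quot.mk (erel ends A) u = Quot.mk (erel ends A) v) :
    ∃ w : E → ZMod q, (∀ e ∉ A, w e = 0) ∧
      ∀ x, bd ends q w x = (if u = x then 1 else 0) - (if v = x then 1 else 0) := by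
  rw [Quot.eq] at h
  induction h with
  | rel a b hab =>
    obtain ⟨e, he, hor⟩ := hab
    rcases hor with h2 | h2
    · refine ⟨chi q e, fun e' he' => ?_, fun x => ?_⟩
      · simp only [chi]; exact if_neg (by rintro rfl; exact he' he)
      · rw [bd_chi, h2]
    · refine ⟨fun e' => - chi q e e', fun e' he' => ?_, fun x => ?_⟩
      · simp only [chi]; rw [if_neg (show ¬ e' = e by rintro rfl; exact he' he)]; ring
      · rw [bd_neg, bd_chi, h2]; ring
  | refl a => exact ⟨fun _ => 0, fun _ _ => rfl, fun x => by rw [bd_zero]; ring⟩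
  | symm a b _ ih =>
    obtain ⟨w, h1, h2⟩ := ih
    refine ⟨fun e => - w e, fun e he => by simp [h1 e he], fun x => ?_⟩
    rw [bd_neg, h2]; ring
  | trans a b c _ _ ih1 ih2 =>
    obtain ⟨w₁, h11, h12⟩ := ih1
    obtain ⟨w₂, h21, h22⟩ := ih2
    refine ⟨fun e => w₁ e + w₂ e, fun e he => by simp [h11 e he, h21 e he], fun x => ?_⟩
    rw [bd_add, h12, h22]; ring

/-- Bridge lemma: a flow supported in `insert e A` vanishes on `e` when the endpoints of `e`
lie in different components of `A`. -/
lemma bridge_zero {A : Finset E} {e : E} {u v : V} (hends : ends e = (u, v))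
    (hdiff : Quot.mk (erel ends A) u ≠ Quot.mk (erel ends A) v)
    (w : E → ZMod q) (hsupp : ∀ e' ∉ insert e A, w e' = 0)
    (hflow : ∀ x, bd ends q w x = 0) : w e = 0 := by
  classical
  set C : Finset V := univ.filter (fun x => Quot.mk (erel ends A) x = Quot.mk (erel ends A) u)
    with hC
  have key : ∑ e' ∈ univ, ((if (ends e').1 ∈ C then w e' else 0)
      - (if (ends e').2 ∈ C then w e' else 0)) = ∑ x ∈ C, bd ends q w x := by
    simp only [bd]
    rw [Finset.sum_sub_distrib, Finset.sum_sub_distrib]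
    congr 1
    · rw [Finset.sum_comm' (s := C) (t := fun x => univ.filter (fun e' => (ends e').1 = x))
        (t' := univ) (s' := fun e' => C.filter (fun x => (ends e').1 = x)) ?_]
      · refine Finset.sum_congr rfl (fun e' _ => ?_)
        by_cases hm : (ends e').1 ∈ C
        · rw [if_pos hm, Finset.filter_eq, if_pos hm, Finset.sum_singleton]
        · rw [if_neg hm, Finset.filter_eq, if_neg hm, Finset.sum_empty]
      · intro x y; simp [and_comm]
    · rw [Finset.sum_comm' (s := C) (t := fun x => univ.filter (fun e' => (ends e').2 = x))
        (t' := univ) (s' := fun e' => C.filter (fun x => (ends e').2 = x)) ?_]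
      · refine Finset.sum_congr rfl (fun e' _ => ?_)
        by_cases hm : (ends e').2 ∈ C
        · rw [if_pos hm, Finset.filter_eq, if_pos hm, Finset.sum_singleton]
        · rw [if_neg hm, Finset.filter_eq, if_neg hm, Finset.sum_empty]
      · intro x y; simp [and_comm]
  have hzero : ∑ x ∈ C, bd ends q w x = 0 :=
    Finset.sum_eq_zero (fun x _ => hflow x)
  rw [hzero] at key
  have hsingle : ∑ e' ∈ univ, ((if (ends e').1 ∈ C then w e' else 0)
      - (if (ends e').2 ∈ C then w e' else 0)) = w e := by
    rw [Finset.sum_eq_single e]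
    · have h1 : (ends e).1 ∈ C := by simp [hC, hends]
      have h2 : (ends e).2 ∉ C := by
        simp only [hC, mem_filter, mem_univ, true_and, hends]
        exact fun h => hdiff h.symm
      rw [if_pos h1, if_neg h2, sub_zero]
    · intro e' _ hne
      by_cases hA : e' ∈ A
      · have hcc : ((ends e').1 ∈ C) ↔ ((ends e').2 ∈ C) := by
          simp only [hC, mem_filter, mem_univ, true_and, edge_mk ends hA]
        by_cases hm : (ends e').1 ∈ C
        · rw [if_pos hm, if_pos (hcc.1 hm), sub_self]
        · rw [if_neg hm, if_neg (fun h => hm (hcc.2 h)), sub_self]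
      · have hw : w e' = 0 := hsupp e' (by simp [hne, hA])
        simp [hw]
    · simp
  rw [hsingle] at key
  exact key

/-- The number of flows supported in `A`. -/
noncomputable def flowCount (A : Finset E) : ℕ :=
  Nat.card {w : E → ZMod q // (∀ e ∉ A, w e = 0) ∧ ∀ x, bd ends q w x = 0}

lemma flowCount_formula (hq : 0 < q) (A : Finset E) :
    Fintype.card V ≤ A.card + numComponents ends A ∧
      flowCount ends q A = q ^ (A.card + numComponents ends A - Fintype.card V) := by
  classical
  haveI : NeZero q := ⟨hq.ne'⟩
  induction A using Finset.induction_on with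
  | empty =>
    constructor
    · rw [numComponents_empty]; simp
    · rw [numComponents_empty]
      simp only [card_empty, zero_add, Nat.sub_self, pow_zero]
      haveI : Unique {w : E → ZMod q // (∀ e ∉ (∅ : Finset E), w e = 0) ∧
          ∀ x, bd ends q w x = 0} := by
        refine ⟨⟨⟨fun _ => 0, fun e _ => rfl, fun x => bd_zero ends q x⟩⟩, ?_⟩
        rintro ⟨w, hw, -⟩
        exact Subtype.ext (funext (fun e => hw e (notMem_empty e)))
      exact Nat.card_unique
  | @insert e A he ih =>
    obtain ⟨hle, hcount⟩ := ih
    have hends : ends e = ((ends e).1, (ends e).2) := rfl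
    set u := (ends e).1
    set v := (ends e).2
    by_cases hsame : Quot.mk (erel ends A) u = Quot.mk (erel ends A) v
    · have hc : numComponents ends (insert e A) = numComponents ends A :=
        numComponents_insert_same ends hends hsame
      have hcard : (insert e A).card = A.card + 1 := card_insert_of_notMem he
      refine ⟨by omega, ?_⟩
      obtain ⟨w₀, hw₀s, hw₀b⟩ := exists_pot ends q hsame
      have hchi_e : chi q e e = 1 := if_pos rfl
      have hw₀e : w₀ e = 0 := hw₀s e he
      have hEq : {w : E → ZMod q // (∀ e' ∉ insert e A, w e' = 0) ∧ ∀ x, bd ends q w x = 0}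
          ≃ ZMod q × {w : E → ZMod q // (∀ e' ∉ A, w e' = 0) ∧ ∀ x, bd ends q w x = 0} := by
        refine ⟨fun w => (w.1 e,
            ⟨fun e' => w.1 e' + (- w.1 e) * (chi q e e' - w₀ e'), ?_, ?_⟩),
          fun p => ⟨fun e' => p.2.1 e' + p.1 * (chi q e e' - w₀ e'), ?_, ?_⟩, ?_, ?_⟩
        · intro e' he'
          by_cases heq : e' = e
          · subst heq
            show w.1 e' + (- w.1 e') * (chi q e' e' - w₀ e') = 0
            rw [hchi_e, hw₀e]; ring
          · show w.1 e' + (- w.1 e) * (chi q e e' - w₀ e') = 0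
            rw [w.2.1 e' (by simp [heq, he']), chi_of_ne q heq,
              hw₀s e' he']; ring
        · intro x
          rw [bd_comb, w.2.2 x, bd_chi, hw₀b x]; ring
        · intro e' he'
          have heq : e' ≠ e := by rintro rfl; exact he' (mem_insert_self e' A)
          have hA : e' ∉ A := fun hh => he' (mem_insert_of_mem hh)
          show p.2.1 e' + p.1 * (chi q e e' - w₀ e') = 0
          rw [p.2.2.1 e' hA, chi_of_ne q heq, hw₀s e' hA]; ring
        · intro x
          rw [bd_comb, p.2.2.2 x, bd_chi, hw₀b x]; ring
        · rintro ⟨w, hs, hf⟩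
          refine Subtype.ext (funext (fun e' => ?_))
          show (w e' + (- w e) * (chi q e e' - w₀ e')) + w e * (chi q e e' - w₀ e') = w e'
          ring
        · rintro ⟨x, w', hs', hf'⟩
          have hw'e : w' e = 0 := hs' e he
          refine Prod.ext ?_ (Subtype.ext (funext (fun e' => ?_)))
          · show w' e + x * (chi q e e - w₀ e) = x
            rw [hchi_e, hw₀e, hw'e]; ring
          · show (w' e' + x * (chi q e e' - w₀ e'))
                + (- (w' e + x * (chi q e e - w₀ e))) * (chi q e e' - w₀ e') = w' e'
            rw [hchi_e, hw₀e, hw'e]; ring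
      have hequiv : flowCount ends q (insert e A) = q * flowCount ends q A := by
        calc flowCount ends q (insert e A) = Nat.card (ZMod q ×
              {w : E → ZMod q // (∀ e' ∉ A, w e' = 0) ∧ ∀ x, bd ends q w x = 0}) :=
            Nat.card_congr hEq
          _ = q * flowCount ends q A := by rw [Nat.card_prod, Nat.card_zmod]; rfl
      rw [hequiv, hcount, hc, hcard]
      have : A.card + 1 + numComponents ends A - Fintype.card V
          = (A.card + numComponents ends A - Fintype.card V) + 1 := by omega
      rw [this, pow_succ]; ring
    · have hc : numComponents ends (insert e A) + 1 = numComponents ends A :=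
        numComponents_insert_diff ends hends hsame
      have hcard : (insert e A).card = A.card + 1 := card_insert_of_notMem he
      refine ⟨by omega, ?_⟩
      have hiff : ∀ w : E → ZMod q,
          ((∀ e' ∉ insert e A, w e' = 0) ∧ ∀ x, bd ends q w x = 0)
            ↔ ((∀ e' ∉ A, w e' = 0) ∧ ∀ x, bd ends q w x = 0) := by
        intro w
        constructor
        · rintro ⟨hs, hf⟩
          refine ⟨fun e' he' => ?_, hf⟩
          by_cases heq : e' = e
          · subst heq
            exact bridge_zero ends q hends hsame w hs hf
          · exact hs e' (by simp [heq, he'])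
        · rintro ⟨hs, hf⟩
          exact ⟨fun e' he' => hs e' (fun hh => he' (mem_insert_of_mem hh)), hf⟩
      have heq : flowCount ends q (insert e A) = flowCount ends q A :=
        Nat.card_congr (Equiv.subtypeEquivRight hiff)
      rw [heq, hcount]
      congr 1
      omega

end Flows
section Final

open Finset

variable {V E : Type*} [Fintype V] [Fintype E] [DecidableEq V] [DecidableEq E]
  (ends : E → V × V)

lemma neg_one_pow_congr' {a b : ℕ} (h : a % 2 = b % 2) : ((-1 : ℤ)) ^ a = (-1) ^ b := by
  have key : ∀ n : ℕ, ((-1 : ℤ)) ^ n = (-1) ^ (n % 2) := by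
    intro n
    conv_lhs => rw [← Nat.div_add_mod n 2]
    rw [pow_add, pow_mul]
    norm_num
  rw [key a, key b, h]

lemma incl_excl (q : ℕ) [NeZero q] :
    (Nat.card {w : E → ZMod q // (∀ x, bd ends q w x = 0) ∧ ∀ e, w e ≠ 0} : ℤ)
      = ∑ A ∈ (univ : Finset E).powerset,
          (-1 : ℤ) ^ (Fintype.card E - A.card) * flowCount ends q A := by
  classical
  have hcard : ∀ (p : (E → ZMod q) → Prop),
      Nat.card {w // p w} = (univ.filter p).card := by
    intro p; rw [Nat.card_eq_fintype_card, Fintype.card_subtype]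
  set FP : Finset (E → ZMod q) := univ.filter (fun w => ∀ x, bd ends q w x = 0) with hFP
  have hflow : ∀ A : Finset E, (flowCount ends q A : ℤ)
      = ∑ w ∈ FP, (if ∀ e ∉ A, w e = 0 then (1 : ℤ) else 0) := by
    intro A
    rw [flowCount, hcard, Finset.card_filter]
    push_cast
    rw [hFP, Finset.sum_filter]
    refine Finset.sum_congr rfl (fun w _ => ?_)
    by_cases h1 : ∀ x, bd ends q w x = 0 <;> by_cases h2 : ∀ e ∉ A, w e = 0 <;>
      simp [h1, h2]
  have hLHS : (Nat.card {w : E → ZMod q //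
      (∀ x, bd ends q w x = 0) ∧ ∀ e, w e ≠ 0} : ℤ)
        = ∑ w ∈ FP, (if ∀ e, w e ≠ 0 then (1 : ℤ) else 0) := by
    rw [hcard, Finset.card_filter]
    push_cast
    rw [hFP, Finset.sum_filter]
    refine Finset.sum_congr rfl (fun w _ => ?_)
    by_cases h1 : ∀ x, bd ends q w x = 0 <;> by_cases h2 : ∀ e : E, w e ≠ 0 <;>
      simp [h1, h2]
  rw [hLHS]
  symm
  calc ∑ A ∈ (univ : Finset E).powerset,
        (-1 : ℤ) ^ (Fintype.card E - A.card) * flowCount ends q A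
      = ∑ A ∈ (univ : Finset E).powerset, ∑ w ∈ FP,
          (-1 : ℤ) ^ (Fintype.card E - A.card) * (if ∀ e ∉ A, w e = 0 then 1 else 0) := by
        exact Finset.sum_congr rfl (fun A _ => by rw [hflow A, Finset.mul_sum])
    _ = ∑ w ∈ FP, ∑ A ∈ (univ : Finset E).powerset,
          (-1 : ℤ) ^ (Fintype.card E - A.card) * (if ∀ e ∉ A, w e = 0 then 1 else 0) :=
        Finset.sum_comm
    _ = ∑ w ∈ FP, (if ∀ e, w e ≠ 0 then (1 : ℤ) else 0) := by
        refine Finset.sum_congr rfl (fun w _ => ?_)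
        set S : Finset E := univ.filter (fun e => w e ≠ 0) with hS
        have hsub : ∀ A : Finset E, (∀ e ∉ A, w e = 0) ↔ S ⊆ A := by
          intro A
          constructor
          · intro h e heS
            rw [hS, mem_filter] at heS
            by_contra he
            exact heS.2 (h e he)
          · intro h e he
            by_contra hw
            exact he (h (by rw [hS, mem_filter]; exact ⟨mem_univ e, hw⟩))
        calc ∑ A ∈ (univ : Finset E).powerset,
              (-1 : ℤ) ^ (Fintype.card E - A.card) * (if ∀ e ∉ A, w e = 0 then 1 else 0)
            = ∑ A ∈ (univ : Finset E).powerset,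
              (if A ⊆ Sᶜ then (-1 : ℤ) ^ A.card else 0) := by
              refine Finset.sum_nbij' (i := fun A => Aᶜ) (j := fun A => Aᶜ)
                (fun A _ => mem_powerset.2 (subset_univ _))
                (fun A _ => mem_powerset.2 (subset_univ _))
                (fun A _ => compl_compl A) (fun A _ => compl_compl A) ?_
              intro A _
              beta_reduce
              simp only [hsub A]
              by_cases hSA : S ⊆ A
              · rw [if_pos hSA, mul_one,
                  if_pos ((Finset.subset_compl_comm).2 (by rwa [compl_compl]))]
                congr 1
                rw [Finset.card_compl]
              · rw [if_neg hSA, mul_zero, if_neg ?_]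
                intro hc
                have := (Finset.subset_compl_comm).1 hc
                rw [compl_compl] at this
                exact hSA this
          _ = ∑ A ∈ Sᶜ.powerset, (-1 : ℤ) ^ A.card := by
              rw [← Finset.sum_filter]
              congr 1
              ext A
              simp [mem_powerset]
          _ = if Sᶜ = ∅ then 1 else 0 := Finset.sum_powerset_neg_one_pow_card
          _ = if ∀ e, w e ≠ 0 then (1 : ℤ) else 0 := by
              congr 1
              rw [Finset.compl_eq_empty_iff, Finset.eq_univ_iff_forall]
              simp [hS]

end Final

/-- Tutte's theorem for the flow polynomial: the number of nowhere-zero `ℤ/qℤ`-flows on a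
finite loopless graph with `k` connected components is `(−1)^{|E|−|V|+k} T_G(0, 1−q)`. -/
theorem stmt14 {V E : Type*} [Fintype V] [Fintype E] [DecidableEq V]
    (ends : E → V × V) (hloop : ∀ e, (ends e).1 ≠ (ends e).2) (q : ℕ) (hq : 0 < q) :
    (Nat.card {w : E → ZMod q //
        (∀ v : V,
          ∑ e ∈ Finset.univ.filter (fun e => (ends e).1 = v), w e
            = ∑ e ∈ Finset.univ.filter (fun e => (ends e).2 = v), w e) ∧
        ∀ e : E, w e ≠ 0} : ℤ)
      = (-1) ^ (Fintype.card E + numComponents ends Finset.univ - Fintype.card V)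
        * multigraphTutte ends 0 (1 - (q : ℤ)) := by
  classical
  haveI : NeZero q := ⟨hq.ne'⟩
  have hiff : ∀ w : E → ZMod q,
      ((∀ v : V, ∑ e ∈ Finset.univ.filter (fun e => (ends e).1 = v), w e
          = ∑ e ∈ Finset.univ.filter (fun e => (ends e).2 = v), w e) ∧ ∀ e : E, w e ≠ 0)
        ↔ ((∀ x, bd ends q w x = 0) ∧ ∀ e : E, w e ≠ 0) := by
    intro w
    refine and_congr_left' (forall_congr' (fun x => ?_))
    rw [bd, sub_eq_zero]
  rw [Nat.card_congr (Equiv.subtypeEquivRight hiff), incl_excl ends q, multigraphTutte,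
    Finset.mul_sum]
  refine Finset.sum_congr rfl (fun A hA => ?_)
  have hAcard : A.card ≤ Fintype.card E := Finset.card_le_univ A
  have hcards : (Finset.univ : Finset E).card = Fintype.card E := Finset.card_univ
  have h1 : numComponents ends A ≤ Fintype.card V := numComponents_le ends A
  have h2 : numComponents ends (Finset.univ : Finset E) ≤ numComponents ends A :=
    numComponents_anti ends (Finset.subset_univ A)
  have h3 : Fintype.card V ≤ A.card + numComponents ends A :=
    (flowCount_formula ends q hq A).1
  have h4 : Fintype.card V ≤ Fintype.card E + numComponents ends (Finset.univ : Finset E) := by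
    have := (flowCount_formula ends q hq Finset.univ).1
    omega
  have hfc : flowCount ends q A
      = q ^ (A.card + numComponents ends A - Fintype.card V) :=
    (flowCount_formula ends q hq A).2
  rw [multigraphRk, multigraphRk, hfc]
  have hq1 : (0 : ℤ) - 1 = -1 := by norm_num
  have hq2 : (1 : ℤ) - q - 1 = -(q : ℤ) := by ring
  rw [hq1, hq2, neg_pow ((q : ℤ))]
  set n := Fintype.card V
  set a := Fintype.card E
  set cA := numComponents ends A
  set cE := numComponents ends (Finset.univ : Finset E)
  set m := A.card
  have hexp : m - (n - cA) = m + cA - n := by omega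
  rw [hexp]
  rw [show ((-1 : ℤ)) ^ (a + cE - n) * ((-1) ^ ((n - cE) - (n - cA))
      * ((-1) ^ (m + cA - n) * (q : ℤ) ^ (m + cA - n)))
    = ((-1 : ℤ)) ^ ((a + cE - n) + ((n - cE) - (n - cA)) + (m + cA - n))
      * (q : ℤ) ^ (m + cA - n) by rw [pow_add, pow_add]; ring]
  rw [neg_one_pow_congr' (a := (a + cE - n) + ((n - cE) - (n - cA)) + (m + cA - n))
    (b := a - m) (by omega)]
  push_cast
  ring
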